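/- Assume ñ > 2 and fix a > 0. For every M > 0 there exists A > 0 such that: for every α ≥ A and every rising radial arc (u, a, τ) with slope α, one has u(τ) > M. (This is the uniform version of: u(τ(α), α) → +∞ as α → +∞.) -/

import Mathlib

open Real Set

/-- `P⁺[u](r)`: the Pucci maximal operator `𝓜⁺_{λ,Λ}` evaluated on the Hessian of the
radial function `v(x) = u(|x|)`, expressed through `u'` and `u''`. -/
noncomputable def Pp (n : ℕ) (lam Lam : ℝ) (u' u'' : ℝ → ℝ) (r : ℝ) : ℝ :=
  Lam * max (u'' r) 0 + lam * min (u'' r) 0 +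
    ((n : ℝ) - 1) * (Lam * max (u' r / r) 0 + lam * min (u' r / r) 0)

/-- `P⁻[u](r)`: the Pucci minimal operator `𝓜⁻_{λ,Λ}` evaluated on the Hessian of the
radial function `v(x) = u(|x|)`. -/
noncomputable def Pm (n : ℕ) (lam Lam : ℝ) (u' u'' : ℝ → ℝ) (r : ℝ) : ℝ :=
  lam * max (u'' r) 0 + Lam * min (u'' r) 0 +
    ((n : ℝ) - 1) * (lam * max (u' r / r) 0 + Lam * min (u' r / r) 0)

/-- `u` satisfies the Pucci differential inequalities at `r`:
`−P⁺[u](r) ≤ |u(r)|^{p−1}u(r) ≤ −P⁻[u](r)`. -/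
def PucciIneq (n : ℕ) (lam Lam p : ℝ) (u u' u'' : ℝ → ℝ) (r : ℝ) : Prop :=
  -Pp n lam Lam u' u'' r ≤ |u r| ^ (p - 1) * u r ∧
    |u r| ^ (p - 1) * u r ≤ -Pm n lam Lam u' u'' r

/-- A rising radial arc with slope `α`: `u ∈ C²([a,τ])`, `u(a) = 0`, `u'(a) = α > 0`,
`u > 0` on `(a,τ]`, `u' > 0` on `[a,τ)`, `u'(τ) = 0`, and `u` satisfies the Pucci
differential inequalities on `(a,τ)`. -/
def RisingArc (n : ℕ) (lam Lam p : ℝ) (u u' u'' : ℝ → ℝ) (a τ α : ℝ) : Prop :=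
  0 < a ∧ a < τ ∧ 0 < α ∧
  (∀ r ∈ Set.Icc a τ, HasDerivAt u (u' r) r) ∧
  (∀ r ∈ Set.Icc a τ, HasDerivAt u' (u'' r) r) ∧
  ContinuousOn u'' (Set.Icc a τ) ∧
  u a = 0 ∧ u' a = α ∧
  (∀ r ∈ Set.Ioc a τ, 0 < u r) ∧
  (∀ r ∈ Set.Ico a τ, 0 < u' r) ∧
  u' τ = 0 ∧
  (∀ r ∈ Set.Ioo a τ, PucciIneq n lam Lam p u u' u'' r)

set_option maxHeartbeats 1000000 in
/-- Lemma 3.1 (i) (paper), uniform version: `u(τ(α), α) → +∞` as `α → +∞`. -/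
theorem rising_arc_peak_tendsto_infty
    (n : ℕ) (hn : 2 ≤ n) (lam Lam p ntil : ℝ) (hlam : 0 < lam) (hlL : lam ≤ Lam) (hp : 1 < p)
    (hnt : ntil = Lam / lam * ((n : ℝ) - 1) + 1) (hnt2 : 2 < ntil)
    (a : ℝ) (ha : 0 < a) (M : ℝ) (hM : 0 < M) :
    ∃ A : ℝ, 0 < A ∧ ∀ α : ℝ, A ≤ α → ∀ (u u' u'' : ℝ → ℝ) (τ : ℝ),
      RisingArc n lam Lam p u u' u'' a τ α → M < u τ := by
  have hnt0 : (0:ℝ) < ntil := by linarith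
  obtain ⟨q, hqdef⟩ : ∃ q : ℝ, q = M ^ (p - 1) * M := ⟨_, rfl⟩
  have hq0 : 0 < q := hqdef ▸ mul_pos (Real.rpow_pos_of_pos hM _) hM
  obtain ⟨C, hCdef⟩ : ∃ C : ℝ, C = q / (lam * ntil) := ⟨_, rfl⟩
  have hC0 : 0 < C := hCdef ▸ div_pos hq0 (mul_pos hlam hnt0)
  obtain ⟨R, hRdef⟩ : ∃ R : ℝ, R = 2 ^ (ntil - 2)⁻¹ * a := ⟨_, rfl⟩
  have h21 : (1:ℝ) < 2 ^ (ntil - 2)⁻¹ := by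
    rw [Real.one_lt_rpow_iff_of_pos (by norm_num)]
    exact Or.inl ⟨by norm_num, inv_pos.mpr (by linarith)⟩
  have haR : a < R := by
    rw [hRdef]
    nlinarith
  have hR0 : 0 < R := ha.trans haR
  have haP : (0:ℝ) < a ^ (ntil - 1) := Real.rpow_pos_of_pos ha _
  have hRP : (0:ℝ) < R ^ ntil := Real.rpow_pos_of_pos hR0 _
  have hA1 : (0:ℝ) < 2 * C * R ^ ntil / a ^ (ntil - 1) := by positivity
  have hA2 : (0:ℝ) < 4 * M * (ntil - 2) / a := div_pos (by nlinarith) ha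
  refine ⟨2 * C * R ^ ntil / a ^ (ntil - 1) + 4 * M * (ntil - 2) / a + 1, by linarith, ?_⟩
  intro α hα u u' u'' τ harc
  obtain ⟨-, haτ, hα0, hu, hu', hu''c, hua, hu'a, hupos, hu'pos, hu'τ, hP⟩ := harc
  have hα1 : 2 * C * R ^ ntil ≤ a ^ (ntil - 1) * α := by
    have h1 : 2 * C * R ^ ntil / a ^ (ntil - 1) ≤ α := by linarith
    rw [div_le_iff₀ haP] at h1
    linarith
  have hα2 : 4 * M * (ntil - 2) / a < α := by linarith
  by_contra hcon
  push_neg at hcon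
  -- u is monotone on [a, τ]
  have humono : MonotoneOn u (Icc a τ) := by
    apply monotoneOn_of_deriv_nonneg (convex_Icc a τ)
    · exact fun r hr => (hu r hr).continuousAt.continuousWithinAt
    · rw [interior_Icc]
      exact fun r hr => ((hu r (Ioo_subset_Icc_self hr)).differentiableAt).differentiableWithinAt
    · rw [interior_Icc]
      intro r hr
      rw [(hu r (Ioo_subset_Icc_self hr)).deriv]
      exact le_of_lt (hu'pos r ⟨hr.1.le, hr.2⟩)
  have huM : ∀ r ∈ Icc a τ, u r ≤ M :=
    fun r hr => le_trans (humono hr ⟨haτ.le, le_refl τ⟩ hr.2) hcon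
  -- key pointwise inequality from the Pucci inequality
  have hlamnt : lam * (ntil - 1) = ((n:ℝ) - 1) * Lam := by
    rw [hnt]; field_simp; ring
  have hstar : ∀ r ∈ Ioo a τ, -q ≤ lam * u'' r + ((n:ℝ) - 1) * Lam * (u' r / r) := by
    intro r hr
    have hr0 : 0 < r := ha.trans hr.1
    have hu'r : 0 < u' r := hu'pos r ⟨hr.1.le, hr.2⟩
    have hv : 0 < u' r / r := div_pos hu'r hr0
    have hur : 0 < u r := hupos r ⟨hr.1, hr.2.le⟩
    have hurM : u r ≤ M := huM r ⟨hr.1.le, hr.2.le⟩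
    have hub : |u r| ^ (p - 1) * u r ≤ q := by
      rw [abs_of_pos hur, hqdef]
      exact mul_le_mul (Real.rpow_le_rpow hur.le hurM (by linarith)) hurM hur.le
        (le_of_lt (Real.rpow_pos_of_pos hM _))
    have hPp := (hP r hr).1
    have hPpge : -q ≤ Pp n lam Lam u' u'' r := by linarith
    rw [Pp, max_eq_left hv.le, min_eq_right hv.le] at hPpge
    rcases le_or_gt 0 (u'' r) with h2 | h2
    · have : 0 ≤ lam * u'' r + ((n:ℝ) - 1) * Lam * (u' r / r) := by
        have hn1 : (0:ℝ) ≤ (n:ℝ) - 1 := by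
          have : (1:ℝ) ≤ (n:ℝ) := by exact_mod_cast Nat.one_le_of_lt hn
          linarith
        have := mul_nonneg hlam.le h2
        nlinarith [mul_nonneg hn1 (mul_nonneg (le_of_lt (hlam.trans_le hlL)) hv.le)]
      linarith
    · rw [max_eq_right h2.le, min_eq_left h2.le] at hPpge
      have hrr : Lam * 0 + lam * u'' r + ((n:ℝ) - 1) * (Lam * (u' r / r) + lam * 0)
          = lam * u'' r + ((n:ℝ) - 1) * Lam * (u' r / r) := by ring
      rw [hrr] at hPpge
      exact hPpge
  -- monotone auxiliary function h
  have hCq : lam * (C * ntil) = q := by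
    rw [hCdef]; field_simp
  obtain ⟨h, hhdef⟩ : ∃ h : ℝ → ℝ, h = fun s => s ^ (ntil - 1) * u' s + C * s ^ ntil := ⟨_, rfl⟩
  have hhd : ∀ r ∈ Ioo a τ, HasDerivAt h
      ((ntil - 1) * r ^ (ntil - 1 - 1) * u' r + r ^ (ntil - 1) * u'' r
        + C * (ntil * r ^ (ntil - 1))) r := by
    intro r hr
    have hr0 : 0 < r := ha.trans hr.1
    rw [hhdef]
    exact ((Real.hasDerivAt_rpow_const (Or.inl hr0.ne')).mul
      (hu' r ⟨hr.1.le, hr.2.le⟩)).add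
      ((Real.hasDerivAt_rpow_const (Or.inl hr0.ne')).const_mul C)
  have hhd_nonneg : ∀ r ∈ Ioo a τ, 0 ≤ (ntil - 1) * r ^ (ntil - 1 - 1) * u' r
      + r ^ (ntil - 1) * u'' r + C * (ntil * r ^ (ntil - 1)) := by
    intro r hr
    have hr0 : 0 < r := ha.trans hr.1
    have ht : (0:ℝ) < r ^ (ntil - 1) := Real.rpow_pos_of_pos hr0 _
    have hrw : r ^ (ntil - 1 - 1) = r ^ (ntil - 1) / r := by
      rw [Real.rpow_sub hr0, Real.rpow_one]
    have hs := hstar r hr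
    have key : lam * ((ntil - 1) * r ^ (ntil - 1 - 1) * u' r + r ^ (ntil - 1) * u'' r
        + C * (ntil * r ^ (ntil - 1)))
        = r ^ (ntil - 1) * ((lam * u'' r + ((n:ℝ) - 1) * Lam * (u' r / r)) + q) := by
      rw [hrw]
      linear_combination (r ^ (ntil - 1) * u' r / r) * hlamnt + r ^ (ntil - 1) * hCq
    have h6 : 0 ≤ lam * ((ntil - 1) * r ^ (ntil - 1 - 1) * u' r + r ^ (ntil - 1) * u'' r
        + C * (ntil * r ^ (ntil - 1))) := by
      rw [key]
      exact mul_nonneg ht.le (by linarith)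
    nlinarith [h6]
  have hhcont : ContinuousOn h (Icc a τ) := by
    rw [hhdef]
    apply ContinuousOn.add
    · apply ContinuousOn.mul
      · intro r hr
        have hr0 : 0 < r := lt_of_lt_of_le ha hr.1
        exact (Real.continuousAt_rpow_const r _ (Or.inl hr0.ne')).continuousWithinAt
      · exact fun r hr => (hu' r hr).continuousAt.continuousWithinAt
    · apply ContinuousOn.mul continuousOn_const
      intro r hr
      have hr0 : 0 < r := lt_of_lt_of_le ha hr.1
      exact (Real.continuousAt_rpow_const r _ (Or.inl hr0.ne')).continuousWithinAt
  have hhmono : MonotoneOn h (Icc a τ) := by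
    apply monotoneOn_of_deriv_nonneg (convex_Icc a τ) hhcont
    · rw [interior_Icc]
      exact fun r hr => ((hhd r hr).differentiableAt).differentiableWithinAt
    · rw [interior_Icc]
      intro r hr
      rw [(hhd r hr).deriv]
      exact hhd_nonneg r hr
  have hha : h a = a ^ (ntil - 1) * α + C * a ^ ntil := by simp [hhdef, hu'a]
  have hhge : ∀ r ∈ Icc a τ, a ^ (ntil - 1) * α + C * a ^ ntil ≤ h r := by
    intro r hr
    rw [← hha]
    exact hhmono ⟨le_refl a, haτ.le⟩ hr hr.1
  -- τ > R
  have hτR : R < τ := by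
    by_contra hle
    push_neg at hle
    have hτ0 : 0 < τ := ha.trans haτ
    have h1 : h τ = C * τ ^ ntil := by simp [hhdef, hu'τ]
    have h2 : C * τ ^ ntil ≤ C * R ^ ntil :=
      mul_le_mul_of_nonneg_left (Real.rpow_le_rpow hτ0.le hle hnt0.le) hC0.le
    have h3 := hhge τ ⟨haτ.le, le_refl τ⟩
    have h4 : (0:ℝ) < C * a ^ ntil := mul_pos hC0 (Real.rpow_pos_of_pos ha _)
    nlinarith [hα1]
  -- lower bound for u' on [a, R]
  have hkey : ∀ r ∈ Icc a R, a ^ (ntil - 1) * α / 2 ≤ r ^ (ntil - 1) * u' r := by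
    intro r hr
    have h3 := hhge r ⟨hr.1, hr.2.trans hτR.le⟩
    have hr0 : 0 < r := lt_of_lt_of_le ha hr.1
    have h2 : C * r ^ ntil ≤ C * R ^ ntil :=
      mul_le_mul_of_nonneg_left (Real.rpow_le_rpow hr0.le hr.2 hnt0.le) hC0.le
    have h4 : (0:ℝ) < C * a ^ ntil := mul_pos hC0 (Real.rpow_pos_of_pos ha _)
    simp only [hhdef] at h3
    nlinarith [hα1]
  -- comparison function w
  obtain ⟨K, hKdef⟩ : ∃ K : ℝ, K = a ^ (ntil - 1) * α / (2 * (ntil - 2)) := ⟨_, rfl⟩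
  have hK0 : 0 < K := by
    rw [hKdef]
    apply div_pos (by positivity)
    linarith
  obtain ⟨w, hwdef⟩ : ∃ w : ℝ → ℝ, w = fun s => u s + K * s ^ (2 - ntil) := ⟨_, rfl⟩
  have hwd : ∀ r ∈ Ioo a R, HasDerivAt w (u' r + K * ((2 - ntil) * r ^ (2 - ntil - 1))) r := by
    intro r hr
    have hr0 : 0 < r := ha.trans hr.1
    rw [hwdef]
    exact (hu r ⟨hr.1.le, hr.2.le.trans hτR.le⟩).add
      ((Real.hasDerivAt_rpow_const (Or.inl hr0.ne')).const_mul K)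
  have hwd_nonneg : ∀ r ∈ Ioo a R, 0 ≤ u' r + K * ((2 - ntil) * r ^ (2 - ntil - 1)) := by
    intro r hr
    have hr0 : 0 < r := ha.trans hr.1
    have ht : (0:ℝ) < r ^ (ntil - 1) := Real.rpow_pos_of_pos hr0 _
    have hrw : r ^ (2 - ntil - 1) = (r ^ (ntil - 1))⁻¹ := by
      rw [← Real.rpow_neg hr0.le]
      congr 1
      ring
    have hk := hkey r ⟨hr.1.le, hr.2.le⟩
    rw [hrw]
    have h0 : ntil - (2:ℝ) ≠ 0 := by linarith
    have h7 : a ^ (ntil - 1) * α / 2 / r ^ (ntil - 1) ≤ u' r := by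
      rw [div_le_iff₀ ht]
      linarith [hk]
    have h8 : K * ((2 - ntil) * (r ^ (ntil - 1))⁻¹)
        = -(a ^ (ntil - 1) * α / 2 / r ^ (ntil - 1)) := by
      rw [hKdef]
      field_simp
      ring
    rw [h8]
    linarith
  have hwcont : ContinuousOn w (Icc a R) := by
    rw [hwdef]
    apply ContinuousOn.add
    · intro r hr
      exact (hu r ⟨hr.1, hr.2.trans hτR.le⟩).continuousAt.continuousWithinAt
    · apply ContinuousOn.mul continuousOn_const
      intro r hr
      have hr0 : 0 < r := lt_of_lt_of_le ha hr.1
      exact (Real.continuousAt_rpow_const r _ (Or.inl hr0.ne')).continuousWithinAt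
  have hwmono : MonotoneOn w (Icc a R) := by
    apply monotoneOn_of_deriv_nonneg (convex_Icc a R) hwcont
    · rw [interior_Icc]
      exact fun r hr => ((hwd r hr).differentiableAt).differentiableWithinAt
    · rw [interior_Icc]
      intro r hr
      rw [(hwd r hr).deriv]
      exact hwd_nonneg r hr
  have hwR : w a ≤ w R := hwmono ⟨le_refl a, haR.le⟩ ⟨haR.le, le_refl R⟩ haR.le
  -- compute R ^ (2 - ntil)
  have hRr : R ^ (2 - ntil) = a ^ (2 - ntil) / 2 := by
    rw [hRdef, Real.mul_rpow (by positivity) ha.le,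
      ← Real.rpow_mul (by norm_num : (0:ℝ) ≤ 2)]
    have hmm : (ntil - 2)⁻¹ * (2 - ntil) = -1 := by
      have : ntil - 2 ≠ 0 := by linarith
      field_simp
      ring
    rw [hmm, Real.rpow_neg_one]
    ring
  have huR : K * a ^ (2 - ntil) / 2 ≤ u R := by
    have hwa : w a = K * a ^ (2 - ntil) := by simp [hwdef, hua]
    have hwRv : w R = u R + K * (a ^ (2 - ntil) / 2) := by rw [hwdef]; simp [hRr]
    rw [hwa, hwRv] at hwR
    linarith
  have hfin : a * α / (4 * (ntil - 2)) ≤ u R := by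
    have h5 : a ^ (ntil - 1) * a ^ (2 - ntil) = a := by
      rw [← Real.rpow_add ha]
      norm_num
    have h5' : a ^ (2 - ntil) = a / a ^ (ntil - 1) := by
      rw [eq_div_iff haP.ne']
      linear_combination h5
    have h0 : ntil - (2:ℝ) ≠ 0 := by linarith
    have heq : K * a ^ (2 - ntil) / 2 = a * α / (4 * (ntil - 2)) := by
      rw [hKdef, h5']
      field_simp
      ring
    linarith [huR, heq.symm.le]
  have hlast : M < a * α / (4 * (ntil - 2)) := by
    rw [lt_div_iff₀ (by linarith : (0:ℝ) < 4 * (ntil - 2))]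
    rw [div_lt_iff₀ ha] at hα2
    nlinarith
  have huτ : u R ≤ u τ := humono ⟨haR.le, hτR.le⟩ ⟨haτ.le, le_refl τ⟩ hτR.le
  linarith
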